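/- Let u be a solution of the traveling-wave problem with speed c ∈ ℝ. Then the function ζ ↦ g(u(ζ)) is integrable over ℝ and c + H(1) = ∫_{−∞}^{+∞} g(u(ζ)) dζ > 0; in particular, a necessary condition for the existence of a solution is c > −H(1). -/

import Mathlib

open Set MeasureTheory Filter

/-- The conjugate exponent `p' = p/(p-1)`. -/
noncomputable def pconj (p : ℝ) : ℝ := p / (p - 1)

/-- The constant `k(p)` from the paper. -/
noncomputable def kfun (p : ℝ) : ℝ :=
  if p < 2 then 1 / (2 ^ (pconj p - 1) - 1)
  else if p = 2 then 1
  else pconj p / (pconj p - 1 +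
    (1 + pconj p * (pconj p - 1) ^ ((1 : ℝ) / (pconj p - 2)) +
      (pconj p - 1) ^ (pconj p / (pconj p - 2))) /
    (1 + (pconj p - 1) ^ ((1 : ℝ) / (pconj p - 2))) ^ pconj p)

/-- Standing assumptions on the data `p, θ, D, H, h, g` (combustion setting). -/
structure CombSetup (p θ : ℝ) (D H h g : ℝ → ℝ) : Prop where
  hp : 1 < p
  hθ0 : 0 < θ
  hθ1 : θ < 1
  hD : ContDiffOn ℝ 1 D (Ioo 0 1)
  hDpos : ∀ v ∈ Ioo (0 : ℝ) 1, 0 < D v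
  hH : ContDiffOn ℝ 1 H (Icc 0 1)
  hH0 : H 0 = 0
  hh : ContinuousOn h (Icc 0 1)
  hHd : ∀ v ∈ Icc (0 : ℝ) 1, HasDerivWithinAt H (h v) (Icc 0 1) v
  hgc : ContinuousOn g (Icc 0 1)
  hg0 : ∀ v ∈ Icc (0 : ℝ) θ, g v = 0
  hgpos : ∀ v ∈ Ioo θ 1, 0 < g v
  hg1 : g 1 = 0
  hInt : IntegrableOn (fun v => D v ^ (pconj p - 1) * g v) (Ioo 0 1)

/-- The diffusive flux `ξ ↦ D(u(ξ)) |u'(ξ)|^{p-2} u'(ξ)`. -/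
noncomputable def flux (p : ℝ) (D u : ℝ → ℝ) : ℝ → ℝ :=
  fun ξ => D (u ξ) * (|deriv u ξ| ^ (p - 2) * deriv u ξ)

/-- Solution of the traveling-wave problem with speed `c`. -/
structure IsTWSol (p c : ℝ) (D h g : ℝ → ℝ) (u : ℝ → ℝ) : Prop where
  cont : Continuous u
  mem : ∀ ξ, u ξ ∈ Icc (0 : ℝ) 1
  smooth : ContDiffOn ℝ 1 u {ξ | u ξ ∈ Ioo (0 : ℝ) 1}
  eqn : ∀ ξ ∈ {ξ | u ξ ∈ Ioo (0 : ℝ) 1},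
    HasDerivAt (flux p D u) (-(c + h (u ξ)) * deriv u ξ - g (u ξ)) ξ
  flux_cont : Continuous (fun ξ => if u ξ ∈ Ioo (0 : ℝ) 1 then flux p D u ξ else 0)
  flux_to0 : ∀ ε > 0, ∃ δ > 0, ∀ ξ, u ξ ∈ Ioo (0 : ℝ) 1 → u ξ < δ → |flux p D u ξ| < ε
  flux_to1 : ∀ ε > 0, ∃ δ > 0, ∀ ξ, u ξ ∈ Ioo (0 : ℝ) 1 → 1 - δ < u ξ → |flux p D u ξ| < ε
  lim_bot : Tendsto u atBot (nhds 1)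
  lim_top : Tendsto u atTop (nhds 0)

/-- Positive solution of the first-order problem with parameter `c`. -/
structure IsFOSol (p c : ℝ) (D h g : ℝ → ℝ) (y : ℝ → ℝ) : Prop where
  cont : ContinuousOn y (Icc 0 1)
  eqn : ∀ v ∈ Ioo (0 : ℝ) 1, HasDerivAt y
    (pconj p * ((c + h v) * (max (y v) 0) ^ (1 / p) - D v ^ (pconj p - 1) * g v)) v
  y0 : y 0 = 0
  y1 : y 1 = 0
  pos : ∀ v ∈ Ioo (0 : ℝ) 1, 0 < y v


lemma antitone_aux {G φ : ℝ → ℝ} {I : Set ℝ} {γ : ℝ} (hG : Continuous G)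
    (hI : IsOpen I)
    (hd : ∀ x ∈ I, HasDerivAt G (φ x) x) (hφ : ∀ x ∈ I, φ x ≤ 0)
    (hK : ∀ x ∉ I, G x = 0 ∨ G x = γ) : Antitone G := by
  intro x y hxy
  by_contra hcon
  push_neg at hcon
  obtain ⟨v, hv, hv0⟩ : ∃ v, v ∈ Ioo (G x) (G y) ∧ v ∉ ({0, γ} : Set ℝ) := by
    obtain ⟨v, hv⟩ := ((Set.Ioo_infinite hcon).diff (Set.toFinite ({0, γ} : Set ℝ))).nonempty
    exact ⟨v, hv.1, hv.2⟩
  set S : Set ℝ := Icc x y ∩ {t | G t = v} with hSdef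
  have hScpt : IsCompact S := isCompact_Icc.inter_right (isClosed_eq hG continuous_const)
  have hSne : S.Nonempty := by
    obtain ⟨t, ht, htv⟩ := intermediate_value_Icc hxy hG.continuousOn ⟨hv.1.le, hv.2.le⟩
    exact ⟨t, ht, htv⟩
  set t₀ := sSup S with ht₀def
  have ht₀S : t₀ ∈ S := hScpt.sSup_mem hSne
  have hGt₀ : G t₀ = v := ht₀S.2
  have ht₀y : t₀ < y :=
    lt_of_le_of_ne ht₀S.1.2 fun hh => hv.2.ne' (by rw [← hGt₀, hh])
  have hgt : ∀ t ∈ Ioc t₀ y, v < G t := by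
    intro t ht
    by_contra hle
    push_neg at hle
    rcases eq_or_lt_of_le hle with heq | hlt
    · have htS : t ∈ S := ⟨⟨ht₀S.1.1.trans ht.1.le, ht.2⟩, show G t = v from heq⟩
      exact absurd (le_csSup hScpt.bddAbove htS) (not_le.2 ht.1)
    · obtain ⟨s, hs, hsv⟩ := intermediate_value_Icc ht.2 hG.continuousOn ⟨hlt.le, hv.2.le⟩
      have hsS : s ∈ S := ⟨⟨ht₀S.1.1.trans (ht.1.le.trans hs.1), hs.2⟩, hsv⟩
      exact absurd (le_csSup hScpt.bddAbove hsS) (not_le.2 (lt_of_lt_of_le ht.1 hs.1))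
  have ht₀I : t₀ ∈ I := by
    by_contra hnot
    apply hv0
    rcases hK t₀ hnot with hh | hh <;> rw [← hGt₀, hh] <;> simp
  have hAnti : ∀ b, t₀ < b → b ≤ y → Ioo t₀ b ⊆ I → G b ≤ v := by
    intro b hb hby hsub
    have hA : AntitoneOn G (Icc t₀ b) := by
      apply antitoneOn_of_deriv_nonpos (convex_Icc _ _) hG.continuousOn
      · intro t ht
        rw [interior_Icc] at ht
        exact (hd t (hsub ht)).differentiableAt.differentiableWithinAt
      · intro t ht
        rw [interior_Icc] at ht
        rw [(hd t (hsub ht)).deriv]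
        exact hφ t (hsub ht)
    have := hA (left_mem_Icc.2 hb.le) (right_mem_Icc.2 hb.le) hb.le
    rwa [hGt₀] at this
  by_cases hT : (Iᶜ ∩ Icc t₀ y).Nonempty
  · have hcpt : IsCompact (Iᶜ ∩ Icc t₀ y) := isCompact_Icc.inter_left hI.isClosed_compl
    set t₂ := sInf (Iᶜ ∩ Icc t₀ y) with ht₂def
    have ht₂mem : t₂ ∈ Iᶜ ∩ Icc t₀ y := hcpt.sInf_mem hT
    have ht₂t₀ : t₀ < t₂ :=
      lt_of_le_of_ne ht₂mem.2.1 (fun hh => ht₂mem.1 (hh ▸ ht₀I))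
    have hsub : Ioo t₀ t₂ ⊆ I := by
      intro t ht
      by_contra hnot
      have : t ∈ Iᶜ ∩ Icc t₀ y := ⟨hnot, ht.1.le, ht.2.le.trans ht₂mem.2.2⟩
      exact absurd (csInf_le hcpt.bddBelow this) (not_le.2 ht.2)
    exact absurd (hAnti t₂ ht₂t₀ ht₂mem.2.2 hsub)
      (not_le.2 (hgt t₂ ⟨ht₂t₀, ht₂mem.2.2⟩))
  · rw [Set.not_nonempty_iff_eq_empty] at hT
    have hsub : Ioo t₀ y ⊆ I := by
      intro t ht
      by_contra hnot
      exact (Set.eq_empty_iff_forall_notMem.1 hT t) ⟨hnot, ht.1.le, ht.2.le⟩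
    exact absurd (hAnti y ht₀y le_rfl hsub) (not_le.2 (hgt y ⟨ht₀y, le_rfl⟩))

/-- Necessary condition `c > -H(1)`.
For any solution `u`, `ζ ↦ g(u(ζ))` is integrable on `ℝ` and
`c + H(1) = ∫_{ℝ} g(u(ζ)) dζ > 0`; in particular `c > -H(1)`. -/
theorem stmt5 (p θ c : ℝ) (D H h g u : ℝ → ℝ) (S : CombSetup p θ D H h g)
    (hu : IsTWSol p c D h g u) :
    Integrable (fun ζ => g (u ζ)) ∧
    c + H 1 = ∫ ζ : ℝ, g (u ζ) ∧
    0 < ∫ ζ : ℝ, g (u ζ) ∧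
    -H 1 < c := by

  classical
  -- the open set where the equation holds
  have hIopen : IsOpen {ξ : ℝ | u ξ ∈ Ioo (0:ℝ) 1} := isOpen_Ioo.preimage hu.cont
  set F : ℝ → ℝ := fun ξ => if u ξ ∈ Ioo (0:ℝ) 1 then flux p D u ξ else 0 with hFdef
  set G : ℝ → ℝ := fun ξ => F ξ + c * u ξ + H (u ξ) with hGdef
  set γ : ℝ := c + H 1 with hγdef
  have hFcont : Continuous F := hu.flux_cont
  have hGcont : Continuous G :=
    (hFcont.add (continuous_const.mul hu.cont)).add
      (S.hH.continuousOn.comp_continuous hu.cont hu.mem)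
  -- derivative of G on the good set
  have hGd : ∀ ξ, u ξ ∈ Ioo (0:ℝ) 1 → HasDerivAt G (-g (u ξ)) ξ := by
    intro ξ hξ
    have hmem : ξ ∈ {ξ : ℝ | u ξ ∈ Ioo (0:ℝ) 1} := hξ
    have hud : HasDerivAt u (deriv u ξ) ξ :=
      ((hu.smooth.differentiableOn one_ne_zero).differentiableAt
        (hIopen.mem_nhds hmem)).hasDerivAt
    have hFeq : F =ᶠ[nhds ξ] flux p D u := by
      filter_upwards [hIopen.mem_nhds hmem] with t ht
      exact if_pos ht
    have hFd : HasDerivAt F (-(c + h (u ξ)) * deriv u ξ - g (u ξ)) ξ :=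
      (hu.eqn ξ hmem).congr_of_eventuallyEq hFeq
    have hHud : HasDerivAt (H ∘ u) (deriv u ξ • h (u ξ)) ξ :=
      (S.hHd (u ξ) (hu.mem ξ)).scomp_hasDerivAt ξ hud hu.mem
    have hsum := (hFd.add (hud.const_mul c)).add hHud
    refine hsum.congr_deriv ?_
    simp only [smul_eq_mul]
    ring
  -- values of G off the good set
  have humem : ∀ ξ, u ξ ∉ Ioo (0:ℝ) 1 → u ξ = 0 ∨ u ξ = 1 := by
    intro ξ hno
    rcases hu.mem ξ with ⟨h0, h1⟩
    rcases eq_or_lt_of_le h0 with hh | hh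
    · exact Or.inl hh.symm
    · rcases eq_or_lt_of_le h1 with hh' | hh'
      · exact Or.inr hh'
      · exact absurd ⟨hh, hh'⟩ hno
  have hKval : ∀ ξ, u ξ ∉ Ioo (0:ℝ) 1 → G ξ = 0 ∨ G ξ = γ := by
    intro ξ hno
    have hF0 : F ξ = 0 := if_neg hno
    rcases humem ξ hno with hh | hh
    · left
      show F ξ + c * u ξ + H (u ξ) = 0
      rw [hF0, hh, S.hH0]; ring
    · right
      show F ξ + c * u ξ + H (u ξ) = γ
      rw [hF0, hh, hγdef]; ring
  -- nonnegativity of g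
  have hgnn : ∀ v ∈ Icc (0:ℝ) 1, 0 ≤ g v := by
    intro v hv
    rcases le_or_gt v θ with hh | hh
    · rw [S.hg0 v ⟨hv.1, hh⟩]
    · rcases eq_or_lt_of_le hv.2 with hh' | hh'
      · rw [hh', S.hg1]
      · exact (S.hgpos v ⟨hh, hh'⟩).le
  -- G is antitone
  have hant : Antitone G :=
    antitone_aux (φ := fun ξ => -g (u ξ)) hGcont hIopen
      (fun ξ hξ => hGd ξ hξ)
      (fun ξ _ => neg_nonpos.2 (hgnn _ (hu.mem ξ)))
      hKval
  -- limits of F at ±∞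
  have hFbot : Tendsto F atBot (nhds 0) := by
    rw [Metric.tendsto_nhds]
    intro ε hε
    obtain ⟨δ, hδ, hflux⟩ := hu.flux_to1 ε hε
    have hlt1 : 1 - min δ (1/2) < 1 := by
      have : (0:ℝ) < min δ (1/2) := lt_min hδ (by norm_num)
      linarith
    have hev : ∀ᶠ ξ in atBot, 1 - min δ (1/2) < u ξ :=
      hu.lim_bot.eventually (eventually_gt_nhds hlt1)
    filter_upwards [hev] with ξ hξ
    rw [Real.dist_eq, sub_zero]
    by_cases hmem : u ξ ∈ Ioo (0:ℝ) 1
    · have h1δ : 1 - δ < u ξ :=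
        lt_of_le_of_lt (by linarith [min_le_left δ (1/2:ℝ)]) hξ
      have hFx : F ξ = flux p D u ξ := by simp only [hFdef]; exact if_pos hmem
      rw [hFx]
      exact hflux ξ hmem h1δ
    · have hFx : F ξ = 0 := by simp only [hFdef]; exact if_neg hmem
      rw [hFx]
      simpa using hε
  have hFtop : Tendsto F atTop (nhds 0) := by
    rw [Metric.tendsto_nhds]
    intro ε hε
    obtain ⟨δ, hδ, hflux⟩ := hu.flux_to0 ε hε
    have hlt0 : (0:ℝ) < min δ (1/2) := lt_min hδ (by norm_num)
    have hev : ∀ᶠ ξ in atTop, u ξ < min δ (1/2) :=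
      hu.lim_top.eventually (eventually_lt_nhds hlt0)
    filter_upwards [hev] with ξ hξ
    rw [Real.dist_eq, sub_zero]
    by_cases hmem : u ξ ∈ Ioo (0:ℝ) 1
    · have hδ' : u ξ < δ := lt_of_lt_of_le hξ (min_le_left _ _)
      have hFx : F ξ = flux p D u ξ := by simp only [hFdef]; exact if_pos hmem
      rw [hFx]
      exact hflux ξ hmem hδ'
    · have hFx : F ξ = 0 := by simp only [hFdef]; exact if_neg hmem
      rw [hFx]
      simpa using hε
  -- limits of G at ±∞
  have hubot : Tendsto u atBot (nhds (1:ℝ)) := hu.lim_bot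
  have hutop : Tendsto u atTop (nhds (0:ℝ)) := hu.lim_top
  have hHbot : Tendsto (fun ξ => H (u ξ)) atBot (nhds (H 1)) := by
    have h1 : Tendsto u atBot (nhdsWithin (1:ℝ) (Icc 0 1)) :=
      tendsto_nhdsWithin_iff.2 ⟨hubot, Eventually.of_forall hu.mem⟩
    exact Filter.Tendsto.comp (S.hH.continuousOn 1 (right_mem_Icc.2 zero_le_one)) h1
  have hHtop : Tendsto (fun ξ => H (u ξ)) atTop (nhds (H 0)) := by
    have h1 : Tendsto u atTop (nhdsWithin (0:ℝ) (Icc 0 1)) :=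
      tendsto_nhdsWithin_iff.2 ⟨hutop, Eventually.of_forall hu.mem⟩
    exact Filter.Tendsto.comp (S.hH.continuousOn 0 (left_mem_Icc.2 zero_le_one)) h1
  have hGbot : Tendsto G atBot (nhds γ) := by
    have hsum := (hFbot.add (hubot.const_mul c)).add hHbot
    have hval : (0:ℝ) + c * 1 + H 1 = γ := by rw [hγdef]; ring
    rw [hval] at hsum
    exact hsum
  have hGtop : Tendsto G atTop (nhds 0) := by
    have hsum := (hFtop.add (hutop.const_mul c)).add hHtop
    have hval : (0:ℝ) + c * 0 + H 0 = 0 := by rw [S.hH0]; ring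
    rw [hval] at hsum
    exact hsum
  -- bounds on G
  have hGle : ∀ ξ, G ξ ≤ γ := fun ξ =>
    ge_of_tendsto hGbot (eventually_atBot.2 ⟨ξ, fun t ht => hant ht⟩)
  have hG0 : ∀ ξ, 0 ≤ G ξ := fun ξ =>
    le_of_tendsto hGtop (eventually_atTop.2 ⟨ξ, fun t ht => hant ht⟩)
  -- positivity of γ
  have hγnn : 0 ≤ γ := le_trans (hG0 0) (hGle 0)
  have hγpos : 0 < γ := by
    rcases eq_or_lt_of_le hγnn with hh | hh
    · exfalso
      have hGzero : ∀ ξ, G ξ = 0 := fun ξ =>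
        le_antisymm (hh ▸ hGle ξ) (hG0 ξ)
      set m : ℝ := (θ + 1)/2 with hm
      have hmθ : θ < m := by rw [hm]; linarith [S.hθ1]
      have hm1 : m < 1 := by rw [hm]; linarith [S.hθ1]
      have hm0 : 0 < m := by rw [hm]; linarith [S.hθ0]
      obtain ⟨a, ha⟩ : ∃ a, m < u a :=
        (hubot.eventually (eventually_gt_nhds hm1)).exists
      obtain ⟨b, hb⟩ : ∃ b, u b < m :=
        (hutop.eventually (eventually_lt_nhds hm0)).exists
      obtain ⟨ξ₀, hξ₀⟩ : m ∈ range u :=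
        intermediate_value_univ b a hu.cont ⟨hb.le, ha.le⟩
      have hmem : u ξ₀ ∈ Ioo (0:ℝ) 1 := by rw [hξ₀]; exact ⟨hm0, hm1⟩
      have hdz : HasDerivAt G 0 ξ₀ := by
        have hGfun : G = fun _ => (0:ℝ) := funext hGzero
        rw [hGfun]
        exact hasDerivAt_const _ _
      have huniq := (hGd ξ₀ hmem).unique hdz
      rw [hξ₀] at huniq
      have := S.hgpos m ⟨hmθ, hm1⟩
      linarith
    · exact hh
  -- off the middle region, g ∘ u vanishes
  have hgE0 : ∀ ξ, ¬ (0 < G ξ ∧ G ξ < γ) → g (u ξ) = 0 := by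
    intro ξ hξ
    have hval : G ξ = 0 ∨ G ξ = γ := by
      rcases lt_or_ge 0 (G ξ) with hh | hh
      · right
        rcases lt_or_ge (G ξ) γ with hh' | hh'
        · exact absurd ⟨hh, hh'⟩ hξ
        · exact le_antisymm (hGle ξ) hh'
      · left; exact le_antisymm hh (hG0 ξ)
    by_cases hmem : u ξ ∈ Ioo (0:ℝ) 1
    · rcases hval with hh | hh
      · have hmin : IsLocalMin G ξ :=
          Filter.Eventually.of_forall (fun t => by rw [hh]; exact hG0 t)
        have := hmin.hasDerivAt_eq_zero (hGd ξ hmem)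
        linarith
      · have hmax : IsLocalMax G ξ :=
          Filter.Eventually.of_forall (fun t => by rw [hh]; exact hGle t)
        have := hmax.hasDerivAt_eq_zero (hGd ξ hmem)
        linarith
    · rcases humem ξ hmem with hh | hh
      · rw [hh]; exact S.hg0 0 ⟨le_rfl, S.hθ0.le⟩
      · rw [hh]; exact S.hg1
  -- if G is constant on [s,w], then g ∘ u vanishes inside
  have hconst0 : ∀ s w t : ℝ, s < t → t < w → G s = G w → g (u t) = 0 := by
    intro s w t hst htw hsw
    have hGt : G t = G s :=
      le_antisymm (hant hst.le) (by rw [hsw]; exact hant htw.le)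
    by_cases hE : 0 < G t ∧ G t < γ
    · have hmem : u t ∈ Ioo (0:ℝ) 1 := by
        by_contra hno
        rcases hKval t hno with hh | hh
        · rw [hh] at hE; exact lt_irrefl 0 hE.1
        · rw [hh] at hE; exact lt_irrefl γ hE.2
      have hmax : IsLocalMax G t := by
        filter_upwards [Ioo_mem_nhds hst htw] with r hr
        rw [hGt]
        exact hant hr.1.le
      have := hmax.hasDerivAt_eq_zero (hGd t hmem)
      linarith
    · exact hgE0 t hE
  -- integral of g ∘ u vanishes on intervals where it is zero inside
  have hguc : Continuous fun t => g (u t) :=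
    S.hgc.comp_continuous hu.cont hu.mem
  have hint_zero : ∀ a b : ℝ, a ≤ b → (∀ t ∈ Ioo a b, g (u t) = 0) →
      ∫ t in a..b, g (u t) = 0 := by
    intro a b hab h0
    rw [intervalIntegral.integral_of_le hab,
        ← MeasureTheory.setIntegral_congr_set MeasureTheory.Ioo_ae_eq_Ioc,
        MeasureTheory.setIntegral_congr_fun measurableSet_Ioo
          (fun t ht => h0 t ht)]
    simp
  -- the key interval identity
  have hmain : ∀ x y : ℝ, x ≤ y → ∫ t in x..y, g (u t) = G x - G y := by
    intro x y hxy
    rcases eq_or_lt_of_le (hant hxy) with heq | hlt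
    · rw [hint_zero x y hxy (fun t ht => hconst0 x y t ht.1 ht.2 heq.symm), heq]
      ring
    · set Sx : Set ℝ := Icc x y ∩ {t | G t = G x} with hSxdef
      have hSxcpt : IsCompact Sx :=
        isCompact_Icc.inter_right (isClosed_eq hGcont continuous_const)
      have hSxne : Sx.Nonempty := ⟨x, ⟨le_rfl, hxy⟩, rfl⟩
      set x' := sSup Sx with hx'def
      have hx'mem : x' ∈ Sx := hSxcpt.sSup_mem hSxne
      set Sy : Set ℝ := Icc x y ∩ {t | G t = G y} with hSydef
      have hSycpt : IsCompact Sy :=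
        isCompact_Icc.inter_right (isClosed_eq hGcont continuous_const)
      have hSyne : Sy.Nonempty := ⟨y, ⟨hxy, le_rfl⟩, rfl⟩
      set y' := sInf Sy with hy'def
      have hy'mem : y' ∈ Sy := hSycpt.sInf_mem hSyne
      have hGx' : G x' = G x := hx'mem.2
      have hGy' : G y' = G y := hy'mem.2
      have hx'y' : x' < y' := by
        rcases lt_or_ge x' y' with hh | hh
        · exact hh
        · exfalso
          have := hant hh
          rw [hGx', hGy'] at this
          exact absurd this (not_le.2 hlt)
      have hmid : ∀ t ∈ Ioo x' y', 0 < G t ∧ G t < γ := by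
        intro t ht
        have h1 : G t < G x := by
          have hle : G t ≤ G x := by rw [← hGx']; exact hant ht.1.le
          rcases eq_or_lt_of_le hle with hh | hh
          · exfalso
            have htS : t ∈ Sx :=
              ⟨⟨hx'mem.1.1.trans ht.1.le, ht.2.le.trans hy'mem.1.2⟩,
                show G t = G x from hh⟩
            exact absurd (le_csSup hSxcpt.bddAbove htS) (not_le.2 ht.1)
          · exact hh
        have h2 : G y < G t := by
          have hle : G y ≤ G t := by rw [← hGy']; exact hant ht.2.le
          rcases eq_or_lt_of_le hle with hh | hh
          · exfalso
            have htS : t ∈ Sy :=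
              ⟨⟨hx'mem.1.1.trans ht.1.le, ht.2.le.trans hy'mem.1.2⟩,
                show G t = G y from hh.symm⟩
            exact absurd (csInf_le hSycpt.bddBelow htS) (not_le.2 ht.2)
          · exact hh
        exact ⟨lt_of_le_of_lt (hG0 y) h2, lt_of_lt_of_le h1 (hGle x)⟩
      have hmemI : ∀ t ∈ Ioo x' y', u t ∈ Ioo (0:ℝ) 1 := by
        intro t ht
        by_contra hno
        rcases hKval t hno with hh | hh
        · exact absurd hh (ne_of_gt (hmid t ht).1)
        · exact absurd hh (ne_of_lt (hmid t ht).2)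
      have hFTC : ∫ t in x'..y', -g (u t) = G y' - G x' := by
        apply intervalIntegral.integral_eq_sub_of_hasDeriv_right_of_le hx'y'.le
          hGcont.continuousOn
        · intro t ht
          exact (hGd t (hmemI t ht)).hasDerivWithinAt
        · exact hguc.neg.intervalIntegrable _ _
      have hzero1 : ∫ t in x..x', g (u t) = 0 :=
        hint_zero x x' hx'mem.1.1
          (fun t ht => hconst0 x x' t ht.1 ht.2 hGx'.symm)
      have hzero2 : ∫ t in y'..y, g (u t) = 0 :=
        hint_zero y' y hy'mem.1.2
          (fun t ht => hconst0 y' y t ht.1 ht.2 hGy')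
      have hii : ∀ a b : ℝ, IntervalIntegrable (fun t => g (u t)) volume a b :=
        fun a b => hguc.intervalIntegrable a b
      have h1 : (∫ t in x..x', g (u t)) + ∫ t in x'..y', g (u t)
          = ∫ t in x..y', g (u t) :=
        intervalIntegral.integral_add_adjacent_intervals (hii x x') (hii x' y')
      have h2 : (∫ t in x..y', g (u t)) + ∫ t in y'..y, g (u t)
          = ∫ t in x..y, g (u t) :=
        intervalIntegral.integral_add_adjacent_intervals (hii x y') (hii y' y)
      have hmidint : ∫ t in x'..y', g (u t) = G x' - G y' := by
        rw [intervalIntegral.integral_neg] at hFTC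
        linarith
      rw [hGx'] at hmidint
      rw [hGy'] at hmidint
      linarith
  -- assemble
  have hnn : ∀ t, 0 ≤ g (u t) := fun t => hgnn _ (hu.mem t)
  have hbound : ∀ n : ℕ, ∫ t in (-(n:ℝ))..(n:ℝ), ‖g (u t)‖ ≤ γ := by
    intro n
    have hn : (-(n:ℝ)) ≤ (n:ℝ) :=
      le_trans (neg_nonpos.2 (Nat.cast_nonneg n)) (Nat.cast_nonneg n)
    have hnorm : ∫ t in (-(n:ℝ))..(n:ℝ), ‖g (u t)‖
        = ∫ t in (-(n:ℝ))..(n:ℝ), g (u t) := by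
      apply intervalIntegral.integral_congr
      intro t _
      exact Real.norm_of_nonneg (hnn t)
    rw [hnorm, hmain _ _ hn]
    have h1 := hGle (-(n:ℝ))
    have h2 := hG0 (n:ℝ)
    linarith
  have hcast : Tendsto (fun n : ℕ => (n:ℝ)) atTop atTop :=
    tendsto_natCast_atTop_atTop
  have hcastneg : Tendsto (fun n : ℕ => -(n:ℝ)) atTop atBot :=
    tendsto_neg_atTop_atBot.comp hcast
  have hIoc : ∀ n : ℕ, IntegrableOn (fun ζ => g (u ζ)) (Ioc (-(n:ℝ)) (n:ℝ)) :=
    fun n => hguc.integrableOn_Ioc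
  have hint : Integrable (fun ζ => g (u ζ)) :=
    MeasureTheory.integrable_of_intervalIntegral_norm_bounded γ hIoc hcastneg hcast
      (Eventually.of_forall hbound)
  have hlim1 : Tendsto (fun n : ℕ => ∫ t in (-(n:ℝ))..(n:ℝ), g (u t)) atTop
      (nhds (∫ ζ : ℝ, g (u ζ))) :=
    MeasureTheory.intervalIntegral_tendsto_integral hint hcastneg hcast
  have hlim2 : Tendsto (fun n : ℕ => ∫ t in (-(n:ℝ))..(n:ℝ), g (u t)) atTop
      (nhds γ) := by
    have h1 : Tendsto (fun n : ℕ => G (-(n:ℝ)) - G (n:ℝ)) atTop (nhds (γ - 0)) :=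
      (hGbot.comp hcastneg).sub (hGtop.comp hcast)
    rw [sub_zero] at h1
    exact Tendsto.congr
      (fun n => (hmain _ _
        (le_trans (neg_nonpos.2 (Nat.cast_nonneg n)) (Nat.cast_nonneg n))).symm) h1
  have hvalI : ∫ ζ : ℝ, g (u ζ) = γ := tendsto_nhds_unique hlim1 hlim2
  refine ⟨hint, ?_, ?_, ?_⟩
  · rw [hvalI, hγdef]
  · rw [hvalI]; exact hγpos
  · rw [hγdef] at hγpos; linarith
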